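/- Symmetry is preserved by the update: if a profile f : [0,1] → ℝ is symmetric about c ∈ ℝ, i.e. f(α) + f(1 − α) = c for Lebesgue-almost every α ∈ [0,1], then Uf is also symmetric about c, i.e. Uf(α) + Uf(1 − α) = c for almost every α ∈ [0,1]. -/

import Mathlib

open MeasureTheory Set

/-- The neighbourhood `N_α(f)` of an agent `α ∈ [0,1]`:
all agents `β ∈ [0,1]` whose opinion is within distance 1 of that of `α`. -/
def nbhdHK (f : ℝ → ℝ) (α : ℝ) : Set ℝ :=
  {β | β ∈ Icc (0:ℝ) 1 ∧ |f β - f α| ≤ 1}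

/-- The Hegselmann–Krause updating operator `U`:
`Uf(α)` is the average of `f` over `N_α(f)` if that set has positive Lebesgue
measure, and `f(α)` otherwise. -/
noncomputable def updateHK (f : ℝ → ℝ) (α : ℝ) : ℝ :=
  if 0 < (volume (nbhdHK f α)).toReal then
    (∫ β in nbhdHK f α, f β) / (volume (nbhdHK f α)).toReal
  else f α

/-- symmetry is preserved by the update: if a profile `f` satisfies
`f(α) + f(1-α) = c` for a.e. `α ∈ [0,1]`, then so does `Uf`. -/
lemma nbhdHK_subset (f : ℝ → ℝ) (α : ℝ) : nbhdHK f α ⊆ Icc 0 1 := fun _ h => h.1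

lemma nbhdHK_measurable (f : ℝ → ℝ) (hf : MonotoneOn f (Icc 0 1)) (α : ℝ) :
    MeasurableSet (nbhdHK f α) := by
  have : OrdConnected (nbhdHK f α) := by
    constructor
    intro x hx y hy z hz
    have hzI : z ∈ Icc (0:ℝ) 1 := ⟨le_trans hx.1.1 hz.1, le_trans hz.2 hy.1.2⟩
    refine ⟨hzI, abs_le.2 ⟨?_, ?_⟩⟩
    · exact le_trans (abs_le.1 hx.2).1 (by linarith [hf hx.1 hzI hz.1])
    · exact le_trans (by linarith [hf hzI hy.1 hz.2]) (abs_le.1 hy.2).2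
  exact this.measurableSet


theorem stmt3 (f : ℝ → ℝ) (hf : MonotoneOn f (Icc 0 1)) (c : ℝ)
    (hsym : ∀ᵐ α ∂(volume.restrict (Icc (0:ℝ) 1)), f α + f (1 - α) = c) :
    ∀ᵐ α ∂(volume.restrict (Icc (0:ℝ) 1)),
      updateHK f α + updateHK f (1 - α) = c := by
  set Z : Set ℝ := {β | ¬ (f β + f (1 - β) = c)} ∩ Icc 0 1 with hZdef
  have hZ : volume Z = 0 := by
    have := ae_iff.1 hsym
    rwa [Measure.restrict_apply' measurableSet_Icc] at this
  have hint : IntegrableOn f (Icc (0:ℝ) 1) := hf.integrableOn_isCompact isCompact_Icc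
  have hmp : MeasurePreserving (fun x : ℝ => 1 - x) volume volume :=
    Measure.measurePreserving_sub_left volume 1
  have hemb : MeasurableEmbedding (fun x : ℝ => 1 - x) :=
    (MeasurableEquiv.subLeft (1:ℝ)).measurableEmbedding
  filter_upwards [hsym, ae_restrict_mem measurableSet_Icc] with α hα hαI
  set N := nbhdHK f α with hN
  set N' := nbhdHK f (1 - α) with hN'
  have hNm : MeasurableSet N := nbhdHK_measurable f hf α
  have hfα : f (1 - α) = c - f α := by linarith
  -- N' is a.e. equal to the preimage of N under the reflection x ↦ 1 - x
  have hae : N' =ᵐ[volume] (fun x : ℝ => 1 - x) ⁻¹' N := by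
    rw [MeasureTheory.ae_eq_set]
    constructor <;> refine measure_mono_null ?_ hZ <;> rintro x ⟨hx, hnx⟩
    · refine ⟨fun hc => hnx ?_, hx.1⟩
      show 1 - x ∈ N
      have hx1 : x ∈ Icc (0:ℝ) 1 := hx.1
      refine ⟨⟨by linarith [hx1.2], by linarith [hx1.1]⟩, ?_⟩
      have h1 : f (1 - x) = c - f x := by linarith
      have h2 := hx.2
      rw [hfα] at h2
      rw [h1]
      calc |c - f x - f α| = |f x - (c - f α)| := by rw [abs_sub_comm]; ring_nf
        _ ≤ 1 := h2
    · have hx' : 1 - x ∈ N := hx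
      have hxI : x ∈ Icc (0:ℝ) 1 := ⟨by linarith [hx'.1.2], by linarith [hx'.1.1]⟩
      refine ⟨fun hc => hnx ⟨hxI, ?_⟩, hxI⟩
      rw [hfα]
      have h1 : f (1 - x) = c - f x := by linarith
      have h2 := hx'.2
      rw [h1] at h2
      calc |f x - (c - f α)| = |c - f x - f α| := by rw [abs_sub_comm]; ring_nf
        _ ≤ 1 := h2
  have hvol : volume N' = volume N := by
    rw [measure_congr hae, hmp.measure_preimage hNm.nullMeasurableSet]
  have hfin : volume N ≠ ⊤ := by
    refine ne_top_of_le_ne_top ?_ (measure_mono (nbhdHK_subset f α))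
    simp [Real.volume_Icc]
  -- integral over N'
  have hIf : IntegrableOn f N := hint.mono_set (nbhdHK_subset f α)
  have hkey : ∫ x in N', f x = c * (volume N).toReal - ∫ x in N, f x := by
    rw [setIntegral_congr_set hae]
    have h1 : ∫ x in (fun x : ℝ => 1 - x) ⁻¹' N, f x
        = ∫ y in N, f (1 - y) := by
      have := hmp.setIntegral_preimage_emb hemb (fun y => f (1 - y)) N
      simpa using this
    rw [h1]
    have h2 : ∫ y in N, f (1 - y) = ∫ y in N, (c - f y) := by
      refine setIntegral_congr_ae hNm ?_
      have hcz : ∀ᵐ x : ℝ, x ∉ Z := measure_eq_zero_iff_ae_notMem.1 hZ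
      filter_upwards [hcz] with x hx hxN
      have hxI := nbhdHK_subset f α hxN
      have : f x + f (1 - x) = c := by
        by_contra h
        exact hx ⟨h, hxI⟩
      linarith
    rw [h2, integral_sub (integrableOn_const (C := c) hfin) hIf]
    rw [setIntegral_const, smul_eq_mul, mul_comm]
    rfl
  -- conclude
  rw [updateHK, updateHK]
  rw [show nbhdHK f α = N from rfl, show nbhdHK f (1 - α) = N' from rfl, hvol]
  by_cases hpos : 0 < (volume N).toReal
  · rw [if_pos hpos, if_pos hpos, hkey]
    field_simp
    ring
  · rw [if_neg hpos, if_neg hpos]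
    linarith
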